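/- Let V be a finite-dimensional vector space over a finite field F, let X = (X_i : i ∈ I) be a finite family of subspaces of V, and let M be the q-matroid whose independent subspaces are the partial q-transversals of X. Then X is a minimal presentation of M (meaning: for every family Y = (Y_i : i ∈ I) with Y_i ≤ X_i for all i, if the partial q-transversals of Y coincide with those of X then Y_i = X_i for all i) if and only if each X_i is cyclic in M, i.e., X_i equals the supremum of all circuits C of M with C ≤ X_i. -/

import Mathlib

/-- `T` is a partial q-transversal of the family `X` of subspaces of `V`: every
(vector-space) basis `b 1, …, b m` of `T` admits an injection `σ` into the index set
with `b i ∉ X (σ i)` for all `i`. -/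
def IsPartialQTransversal {F V ι : Type*} [Field F] [AddCommGroup V] [Module F V]
    (X : ι → Submodule F V) (T : Submodule F V) : Prop :=
  ∀ (m : ℕ) (b : Fin m → V), LinearIndependent F b → Submodule.span F (Set.range b) = T →
    ∃ σ : Fin m → ι, Function.Injective σ ∧ ∀ i, b i ∉ X (σ i)

/-- A circuit of the q-matroid of partial q-transversals of `X`: a dependent subspace
(not a partial q-transversal) all of whose proper subspaces are independent. -/
def IsQTCircuit {F V ι : Type*} [Field F] [AddCommGroup V] [Module F V]
    (X : ι → Submodule F V) (C : Submodule F V) : Prop :=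
  ¬ IsPartialQTransversal X C ∧
    ∀ D : Submodule F V, D < C → IsPartialQTransversal X D

section QTAux

variable {F V ι : Type*} [Field F] [AddCommGroup V] [Module F V]

open Submodule Set

/-- The number of indices `j` such that `W` is not contained in `X j`. -/
noncomputable def nuQT (X : ι → Submodule F V) (W : Submodule F V) : ℕ :=
  {j | ¬ W ≤ X j}.ncard

variable [Fintype ι] [FiniteDimensional F V]

lemma nuQT_mono (X : ι → Submodule F V) {W W' : Submodule F V} (h : W ≤ W') :
    nuQT X W ≤ nuQT X W' :=
  Set.ncard_le_ncard (fun _ hj hle => hj (h.trans hle)) (Set.toFinite _)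

lemma nuQT_le_of_le {X Y : ι → Submodule F V} (h : ∀ j, Y j ≤ X j) (W : Submodule F V) :
    nuQT X W ≤ nuQT Y W :=
  Set.ncard_le_ncard (fun j hj hle => hj (hle.trans (h j))) (Set.toFinite _)

/-- The numeric (Hall-type) characterization of partial q-transversals. -/
lemma isPartialQTransversal_iff (X : ι → Submodule F V) (T : Submodule F V) :
    IsPartialQTransversal X T ↔ ∀ W ≤ T, Module.finrank F W ≤ nuQT X W := by
  constructor
  · intro h W hWT
    obtain ⟨bw, hbw_sub, hbw_span, hbw_li⟩ := exists_linearIndependent F (W : Set V)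
    rw [Submodule.span_eq] at hbw_span
    have hbwT : bw ⊆ (T : Set V) := hbw_sub.trans (SetLike.coe_subset_coe.mpr hWT)
    obtain ⟨B, hBT, hbwB, hTspan, hBli⟩ : ∃ B ⊆ (T : Set V), bw ⊆ B ∧ (T : Set V) ⊆ Submodule.span F B ∧
        LinearIndependent F ((↑) : B → V) := exists_linearIndepOn_id_extension hbw_li hbwT
    have hBfin : B.Finite := hBli.setFinite
    haveI := hBfin.fintype
    have hspanB : Submodule.span F B = T := by
      refine le_antisymm (Submodule.span_le.mpr hBT) ?_
      intro x hx
      exact hTspan hx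
    set m := Fintype.card B with hm
    let e : Fin m ≃ B := (Fintype.equivFin B).symm
    let b : Fin m → V := fun i => ((e i : V))
    have hbli : LinearIndependent F b := hBli.comp e e.injective
    have hbrange : Set.range b = B := by
      ext x
      constructor
      · rintro ⟨i, rfl⟩; exact (e i).2
      · intro hx; exact ⟨e.symm ⟨x, hx⟩, by simp [b]⟩
    obtain ⟨σ, hσinj, hσ⟩ := h m b hbli (by rw [hbrange, hspanB])
    haveI : Fintype bw := (hBfin.subset hbwB).fintype
    have hbmem : ∀ (x : V) (hx : x ∈ B), b (e.symm ⟨x, hx⟩) = x := by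
      intro x hx; simp [b]
    let f : bw → {j // ¬ W ≤ X j} := fun w =>
      ⟨σ (e.symm ⟨(w : V), hbwB w.2⟩), by
        intro hle
        apply hσ (e.symm ⟨(w : V), hbwB w.2⟩)
        rw [hbmem (w : V) (hbwB w.2)]
        exact hle (hbw_sub w.2)⟩
    have hfinj : Function.Injective f := by
      intro a₁ a₂ hab
      have h1 : σ (e.symm ⟨(a₁ : V), hbwB a₁.2⟩) = σ (e.symm ⟨(a₂ : V), hbwB a₂.2⟩) :=
        Subtype.ext_iff.mp hab
      have h2 := e.symm.injective (hσinj h1)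
      have h3 : ((⟨(a₁ : V), hbwB a₁.2⟩ : B) : V) = ((⟨(a₂ : V), hbwB a₂.2⟩ : B) : V) :=
        congrArg Subtype.val h2
      exact Subtype.ext h3
    have hcard : Module.finrank F W = Nat.card bw := by
      rw [← hbw_span, finrank_span_set_eq_card hbw_li, Nat.card_coe_set_eq,
        Set.ncard_eq_toFinset_card']
    calc Module.finrank F W = Nat.card bw := hcard
      _ ≤ Nat.card {j // ¬ W ≤ X j} := Nat.card_le_card_of_injective f hfinj
      _ = nuQT X W := Nat.card_coe_set_eq _
  · intro hP m b hbli hbspan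
    classical
    let t : Fin m → Finset ι := fun i => Finset.univ.filter fun j => b i ∉ X j
    have hHall : ∀ s : Finset (Fin m), s.card ≤ (s.biUnion t).card := by
      intro s
      set W : Submodule F V := Submodule.span F (b '' ↑s) with hW
      have hWT : W ≤ T := by
        rw [← hbspan]
        exact Submodule.span_mono (Set.image_subset_range b ↑s)
      have hdim : Module.finrank F W = s.card := by
        have hli : LinearIndependent F fun i : (↑s : Set (Fin m)) => b i :=
          hbli.comp _ Subtype.val_injective
        have hrange : Set.range (fun i : (↑s : Set (Fin m)) => b i) = b '' ↑s := by
          ext x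
          simp [Set.mem_image]
        have := finrank_span_eq_card hli
        rw [hrange] at this
        rw [hW, this]
        simp
      have hset : (↑(s.biUnion t) : Set ι) = {j | ¬ W ≤ X j} := by
        ext j
        simp only [Finset.coe_biUnion, Set.mem_iUnion, Finset.mem_coe, Finset.mem_filter,
          Finset.mem_univ, true_and, Set.mem_setOf_eq, t]
        constructor
        · rintro ⟨i, his, hj⟩ hle
          exact hj (hle (Submodule.subset_span (Set.mem_image_of_mem b his)))
        · intro hn
          by_contra hno
          push_neg at hno
          apply hn
          rw [hW]
          apply Submodule.span_le.mpr
          rintro x ⟨i, his, rfl⟩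
          exact hno i his
      have hcard : (s.biUnion t).card = nuQT X W := by
        rw [nuQT, ← hset, Set.ncard_coe_finset]
      rw [hcard, ← hdim]
      exact hP W hWT
    obtain ⟨σ, hσinj, hσ⟩ := (Finset.all_card_le_biUnion_card_iff_exists_injective t).mp hHall
    exact ⟨σ, hσinj, fun i => (Finset.mem_filter.mp (hσ i)).2⟩

/-- The numeric characterization of circuits. -/
lemma isQTCircuit_iff (X : ι → Submodule F V) (C : Submodule F V) :
    IsQTCircuit X C ↔ nuQT X C < Module.finrank F C ∧
      ∀ W < C, Module.finrank F W ≤ nuQT X W := by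
  rw [IsQTCircuit]
  simp only [isPartialQTransversal_iff]
  constructor
  · rintro ⟨h1, h2⟩
    have hall : ∀ W < C, Module.finrank F W ≤ nuQT X W := fun W hW => h2 W hW W le_rfl
    refine ⟨?_, hall⟩
    push_neg at h1
    obtain ⟨W, hWC, hW⟩ := h1
    rcases lt_or_eq_of_le hWC with h' | rfl
    · exact absurd (hall W h') (not_le.mpr hW)
    · exact hW
  · rintro ⟨h1, h2⟩
    constructor
    · intro hall
      exact absurd (hall C le_rfl) (not_le.mpr h1)
    · intro D hD W hWD
      exact h2 W (lt_of_le_of_lt hWD hD)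

lemma exists_circuit_le_aux (X : ι → Submodule F V) :
    ∀ (n : ℕ) (W : Submodule F V), Module.finrank F W ≤ n →
      nuQT X W < Module.finrank F W → ∃ C ≤ W, IsQTCircuit X C := by
  intro n
  induction n with
  | zero => intro W hn h; omega
  | succ n ih =>
    intro W hn h
    by_cases hc : ∀ W' < W, Module.finrank F W' ≤ nuQT X W'
    · exact ⟨W, le_rfl, (isQTCircuit_iff X W).mpr ⟨h, hc⟩⟩
    · push_neg at hc
      obtain ⟨W', hW', hviol⟩ := hc
      have hlt := Submodule.finrank_lt_finrank_of_lt hW'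
      obtain ⟨C, hCW', hC⟩ := ih W' (by omega) hviol
      exact ⟨C, hCW'.trans hW'.le, hC⟩

lemma exists_circuit_le (X : ι → Submodule F V) (W : Submodule F V)
    (h : nuQT X W < Module.finrank F W) : ∃ C ≤ W, IsQTCircuit X C :=
  exists_circuit_le_aux X (Module.finrank F W) W le_rfl h

/-- A circuit `C` satisfies `finrank C ≤ nuQT C + 1` (indeed equality). -/
lemma finrank_le_nuQT_succ_of_circuit (X : ι → Submodule F V) (C : Submodule F V)
    (hC : IsQTCircuit X C) : Module.finrank F C ≤ nuQT X C + 1 := by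
  classical
  obtain ⟨h1, h2⟩ := (isQTCircuit_iff X C).mp hC
  obtain ⟨bc, hsub, hspan, hli⟩ := exists_linearIndependent F (C : Set V)
  rw [Submodule.span_eq] at hspan
  have hfin : bc.Finite := hli.setFinite
  haveI := hfin.fintype
  have hcard : bc.toFinset.card = Module.finrank F C := by
    rw [← finrank_span_set_eq_card hli, hspan]
  have hn : 1 ≤ Module.finrank F C := by omega
  have hne : bc.toFinset.Nonempty := by
    rw [← Finset.card_pos]
    omega
  obtain ⟨x0, hx0⟩ := hne
  rw [Set.mem_toFinset] at hx0
  have hdiff_sub : bc \ {x0} ⊆ bc := Set.diff_subset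
  have hliW : LinearIndependent F ((↑) : (bc \ {x0} : Set V) → V) := LinearIndepOn.mono (R := F) (v := id) hli hdiff_sub
  haveI : Fintype (bc \ {x0} : Set V) := (hfin.subset hdiff_sub).fintype
  set W := Submodule.span F (bc \ {x0} : Set V) with hWdef
  have hWC : W ≤ C := by
    rw [← hspan]
    exact Submodule.span_mono hdiff_sub
  have hdimW : Module.finrank F W = Module.finrank F C - 1 := by
    rw [hWdef, finrank_span_set_eq_card hliW, ← hcard]
    have : (bc \ {x0} : Set V).toFinset = bc.toFinset \ {x0} := by
      ext x; simp
    rw [this, Finset.card_sdiff_of_subset (by simpa using hx0)]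
    simp
  have hWlt : W < C := by
    refine lt_of_le_of_ne hWC ?_
    intro hEq
    rw [hEq] at hdimW
    omega
  have h3 := h2 W hWlt
  have h4 := nuQT_mono X hWC
  omega

end QTAux

/-- A presentation `X = (X i : i ∈ ι)` of its q-matroid `M` of partial q-transversals is
minimal (no componentwise-smaller family has the same partial q-transversals) iff every
`X i` is cyclic in `M`, i.e. `X i` is the supremum of the circuits of `M` contained
in it. -/
theorem minimal_presentation_iff_cyclic {F V ι : Type*} [Field F] [Fintype F]
    [AddCommGroup V] [Module F V] [FiniteDimensional F V] [Fintype ι]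
    (X : ι → Submodule F V) :
    (∀ Y : ι → Submodule F V, (∀ i, Y i ≤ X i) →
        (∀ T : Submodule F V, IsPartialQTransversal Y T ↔ IsPartialQTransversal X T) →
        ∀ i, Y i = X i) ↔
    (∀ i, X i = sSup {C : Submodule F V | IsQTCircuit X C ∧ C ≤ X i}) := by
  classical
  constructor
  · intro hmin i
    set Z := sSup {C : Submodule F V | IsQTCircuit X C ∧ C ≤ X i} with hZ
    have hZle : Z ≤ X i := sSup_le fun C hC => hC.2
    set Y : ι → Submodule F V := fun j => if j = i then Z else X j with hY
    have hYle : ∀ j, Y j ≤ X j := by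
      intro j
      by_cases h : j = i
      · subst h; simp only [hY, if_pos rfl]; exact hZle
      · simp [hY, h]
    have hsame : ∀ T, IsPartialQTransversal Y T ↔ IsPartialQTransversal X T := by
      intro T
      rw [isPartialQTransversal_iff, isPartialQTransversal_iff]
      constructor
      · intro hPY
        by_contra hPX
        push_neg at hPX
        obtain ⟨W, hWT, hW⟩ := hPX
        obtain ⟨C, hCW, hC⟩ := exists_circuit_le X W hW
        have hCn : nuQT Y C = nuQT X C := by
          unfold nuQT
          congr 1
          ext j
          simp only [Set.mem_setOf_eq]
          by_cases hj : j = i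
          · subst hj
            simp only [hY, if_pos rfl]
            constructor
            · intro h hle
              exact h (le_sSup ⟨hC, hle⟩)
            · intro h hle
              exact h (hle.trans hZle)
          · simp [hY, hj]
        have h1 := ((isQTCircuit_iff X C).mp hC).1
        have h2 := hPY C (hCW.trans hWT)
        omega
      · intro hPX W hWT
        exact le_trans (hPX W hWT) (nuQT_le_of_le hYle W)
    have := hmin Y hYle hsame i
    simp only [hY, if_pos rfl] at this
    exact this.symm
  · intro hcyc Y hYle hsame i
    refine le_antisymm (hYle i) ?_
    conv_lhs => rw [hcyc i]
    apply sSup_le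
    rintro C ⟨hC, hCXi⟩
    by_contra hnot
    have hdepY : ¬ IsPartialQTransversal Y C := fun h => hC.1 ((hsame C).mp h)
    rw [isPartialQTransversal_iff] at hdepY
    push_neg at hdepY
    obtain ⟨W, hWC, hW⟩ := hdepY
    rcases lt_or_eq_of_le hWC with hlt | rfl
    · have h1 := ((isQTCircuit_iff X C).mp hC).2 W hlt
      have h2 := nuQT_le_of_le hYle W
      omega
    · have h1 := finrank_le_nuQT_succ_of_circuit X W hC
      have hsub : {j | ¬ W ≤ X j} ⊆ {j | ¬ W ≤ Y j} :=
        fun j hj hle => hj (hle.trans (hYle j))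
      have hstrict : nuQT X W < nuQT Y W := by
        apply Set.ncard_lt_ncard ?_ (Set.toFinite _)
        rw [Set.ssubset_iff_of_subset hsub]
        exact ⟨i, hnot, fun h => h hCXi⟩
      omega
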